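/- For real α with −1/2 < α < 0, ∫₀¹ x^(α−1)((1−x)^α − 1) dx + 1/α = Γ(α)Γ(α+1)/Γ(2α+1). -/

import Mathlib

open MeasureTheory intervalIntegral

lemma aux_beta_measurable (α : ℝ) : Measurable (fun x : ℝ => x ^ α * (1 - x) ^ α) :=
  (measurable_id'.pow_const α).mul ((measurable_const.sub measurable_id').pow_const α)

lemma aux_beta_integrable {α : ℝ} (hm : -1 < α) (h1 : α < 0) :
    IntervalIntegrable (fun x : ℝ => x ^ α * (1 - x) ^ α) volume 0 1 := by
  have half : IntervalIntegrable (fun x : ℝ => x ^ α * (1 - x) ^ α) volume 0 (1/2) := by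
    refine IntervalIntegrable.mono_fun' (g := fun x : ℝ => (1/2 : ℝ) ^ α * x ^ α)
      ((intervalIntegrable_rpow' hm).const_mul _) 
      (aux_beta_measurable α).aestronglyMeasurable ?_
    have hsub : Set.uIoc (0:ℝ) (1/2) = Set.Ioc (0:ℝ) (1/2) := Set.uIoc_of_le (by norm_num)
    rw [Filter.EventuallyLE, hsub, ae_restrict_iff' measurableSet_Ioc]
    refine Filter.Eventually.of_forall fun x hx => ?_
    have hx0 : 0 < x := hx.1
    have hx2 : x ≤ 1/2 := hx.2
    have hb : (1 - x) ^ α ≤ (1/2 : ℝ) ^ α :=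
      Real.rpow_le_rpow_of_nonpos (by norm_num) (by linarith) h1.le
    have hnn : 0 ≤ x ^ α * (1 - x) ^ α :=
      mul_nonneg (Real.rpow_nonneg hx0.le _) (Real.rpow_nonneg (by linarith) _)
    rw [Real.norm_eq_abs, abs_of_nonneg hnn, mul_comm (x ^ α)]
    exact mul_le_mul_of_nonneg_right hb (Real.rpow_nonneg hx0.le _)
  have half2 : IntervalIntegrable (fun x : ℝ => x ^ α * (1 - x) ^ α) volume (1/2) 1 := by
    have := (half.comp_sub_left 1).symm
    norm_num at this
    simpa [mul_comm] using this
  exact half.trans half2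

lemma aux_key_bound {α x : ℝ} (h0 : -(1/2) < α) (h1 : α < 0) (hx : x ∈ Set.Ioo (0:ℝ) 1) :
    0 ≤ (1 - x) ^ α - 1 ∧ (1 - x) ^ α - 1 ≤ x * (1 - x) ^ α := by
  have hy : 0 < 1 - x := by linarith [hx.2]
  have hy1 : 1 - x ≤ 1 := by linarith [hx.1]
  constructor
  · have := Real.one_le_rpow_of_pos_of_le_one_of_nonpos hy hy1 h1.le
    linarith
  · have hinv : (1 - x) ^ α * (1 - x) ^ (-α) = 1 := by
      rw [← Real.rpow_add hy]; simp
    have hge : (1 - x) ^ (1:ℝ) ≤ (1 - x) ^ (-α) :=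
      Real.rpow_le_rpow_of_exponent_ge hy hy1 (by linarith)
    rw [Real.rpow_one] at hge
    have hpos : 0 ≤ (1 - x) ^ α := Real.rpow_nonneg hy.le _
    nlinarith

lemma aux_main_measurable (α : ℝ) :
    Measurable (fun x : ℝ => x ^ (α - 1) * ((1 - x) ^ α - 1)) :=
  (measurable_id'.pow_const _).mul
    (((measurable_const.sub measurable_id').pow_const α).sub measurable_const)

lemma aux_main_integrable {α : ℝ} (h0 : -(1/2) < α) (h1 : α < 0) :
    IntervalIntegrable (fun x : ℝ => x ^ (α - 1) * ((1 - x) ^ α - 1)) volume 0 1 := by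
  refine IntervalIntegrable.mono_fun' (g := fun x : ℝ => x ^ α * (1 - x) ^ α)
    (aux_beta_integrable (by linarith) h1) (aux_main_measurable α).aestronglyMeasurable ?_
  have hsub : Set.uIoc (0:ℝ) 1 = Set.Ioc (0:ℝ) 1 := Set.uIoc_of_le (by norm_num)
  rw [Filter.EventuallyLE, hsub]
  have hne : ∀ᵐ x : ℝ ∂(volume.restrict (Set.Ioc (0:ℝ) 1)), x ≠ 1 :=
    ae_restrict_of_ae (by
      have : (volume : Measure ℝ) {(1:ℝ)} = 0 := measure_singleton 1
      rw [ae_iff]; simpa using this)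
  have hmem : ∀ᵐ x : ℝ ∂(volume.restrict (Set.Ioc (0:ℝ) 1)), x ∈ Set.Ioc (0:ℝ) 1 :=
    ae_restrict_mem measurableSet_Ioc
  filter_upwards [hne, hmem] with x hxne hxmem
  have hx : x ∈ Set.Ioo (0:ℝ) 1 := ⟨hxmem.1, lt_of_le_of_ne hxmem.2 hxne⟩
  obtain ⟨hb0, hb1⟩ := aux_key_bound h0 h1 hx
  have hxp : 0 < x := hx.1
  have hnn : 0 ≤ x ^ (α - 1) * ((1 - x) ^ α - 1) :=
    mul_nonneg (Real.rpow_nonneg hxp.le _) hb0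
  rw [Real.norm_eq_abs, abs_of_nonneg hnn]
  calc x ^ (α - 1) * ((1 - x) ^ α - 1) ≤ x ^ (α - 1) * (x * (1 - x) ^ α) :=
        mul_le_mul_of_nonneg_left hb1 (Real.rpow_nonneg hxp.le _)
    _ = x ^ α * (1 - x) ^ α := by
        rw [show x ^ α = x ^ (α - 1) * x by
          rw [← Real.rpow_add_one hxp.ne' (α - 1), sub_add_cancel]]
        ring

lemma aux_ftc {α : ℝ} (h0 : -(1/2) < α) (h1 : α < 0) :
    α * (∫ x in (0:ℝ)..1, x ^ (α - 1) * ((1 - x) ^ α - 1))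
      - (2 * α + 1) * (∫ x in (0:ℝ)..1, x ^ α * (1 - x) ^ α) = -1 := by
  set f' : ℝ → ℝ := fun x =>
    α * (x ^ (α - 1) * ((1 - x) ^ α - 1)) - (2 * α + 1) * (x ^ α * (1 - x) ^ α) with hf'
  set F : ℝ → ℝ := fun x => x ^ α * ((1 - x) ^ (α + 1) - 1) with hF
  have hint1 : IntervalIntegrable
      (fun x : ℝ => α * (x ^ (α - 1) * ((1 - x) ^ α - 1))) volume 0 1 :=
    (aux_main_integrable h0 h1).const_mul α
  have hint2 : IntervalIntegrable
      (fun x : ℝ => (2 * α + 1) * (x ^ α * (1 - x) ^ α)) volume 0 1 :=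
    (aux_beta_integrable (by linarith) h1).const_mul _
  have hderiv : ∀ x ∈ Set.Ioo (0:ℝ) 1, HasDerivAt F (f' x) x := by
    intro x hx
    have hx0 : 0 < x := hx.1
    have hy : 0 < 1 - x := by linarith [hx.2]
    have d1 : HasDerivAt (fun y : ℝ => y ^ α) (α * x ^ (α - 1)) x :=
      Real.hasDerivAt_rpow_const (Or.inl hx0.ne')
    have dinner : HasDerivAt (fun y : ℝ => 1 - y) (-1 : ℝ) x := by
      simpa using (hasDerivAt_id x).const_sub 1
    have douter : HasDerivAt (fun z : ℝ => z ^ (α + 1))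
        ((α + 1) * (1 - x) ^ (α + 1 - 1)) (1 - x) :=
      Real.hasDerivAt_rpow_const (Or.inl hy.ne')
    have d2 : HasDerivAt (fun y : ℝ => (1 - y) ^ (α + 1))
        ((α + 1) * (1 - x) ^ (α + 1 - 1) * (-1)) x := douter.comp x dinner
    have d3 : HasDerivAt (fun y : ℝ => y ^ α * ((1 - y) ^ (α + 1) - 1)) _ x :=
      d1.mul (d2.sub_const 1)
    have e1 : (1 - x) ^ (α + 1) = (1 - x) ^ α * (1 - x) := by
      rw [Real.rpow_add_one hy.ne' α]
    have e2 : x ^ α = x ^ (α - 1) * x := by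
      rw [← Real.rpow_add_one hx0.ne' (α - 1), sub_add_cancel]
    convert d3 using 1
    simp only [add_sub_cancel_right, hf']
    linear_combination (-(α * x ^ (α - 1))) * e1 - (α * (1 - x) ^ α) * e2
  have htend0 : Filter.Tendsto F (nhdsWithin 0 (Set.Ioi 0)) (nhds 0) := by
    have hmem : Set.Ioo (0:ℝ) 1 ∈ nhdsWithin (0:ℝ) (Set.Ioi 0) :=
      Ioo_mem_nhdsGT_of_mem ⟨le_refl 0, zero_lt_one⟩
    have hg : Filter.Tendsto (fun x : ℝ => x ^ (α + 1)) (nhdsWithin 0 (Set.Ioi 0)) (nhds 0) := by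
      have hc := (Real.continuousAt_rpow_const 0 (α + 1) (Or.inr (by linarith))).tendsto
      rw [Real.zero_rpow (by linarith : α + 1 ≠ 0)] at hc
      exact hc.mono_left nhdsWithin_le_nhds
    refine squeeze_zero_norm' ?_ hg
    filter_upwards [hmem] with x hx
    have hx0 : 0 < x := hx.1
    have hy : 0 < 1 - x := by linarith [hx.2]
    have hy1 : 1 - x ≤ 1 := by linarith
    have hb1 : (1 - x) ^ (α + 1) ≤ 1 := Real.rpow_le_one hy.le hy1 (by linarith)
    have hb2 : 1 - x ≤ (1 - x) ^ (α + 1) := by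
      have := Real.rpow_le_rpow_of_exponent_ge hy hy1 (by linarith : α + 1 ≤ 1)
      rwa [Real.rpow_one] at this
    have habs : |(1 - x) ^ (α + 1) - 1| ≤ x := by
      rw [abs_of_nonpos (by linarith)]; linarith
    have : ‖F x‖ ≤ x ^ α * x := by
      rw [hF, norm_mul, Real.norm_eq_abs, Real.norm_eq_abs,
        abs_of_nonneg (Real.rpow_nonneg hx0.le α)]
      exact mul_le_mul_of_nonneg_left habs (Real.rpow_nonneg hx0.le α)
    calc ‖F x‖ ≤ x ^ α * x := this
      _ = x ^ (α + 1) := (Real.rpow_add_one hx0.ne' α).symm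
  have htend1 : Filter.Tendsto F (nhdsWithin 1 (Set.Iio 1)) (nhds (-1)) := by
    have c1 : ContinuousAt (fun y : ℝ => y ^ α) 1 :=
      Real.continuousAt_rpow_const 1 α (Or.inl one_ne_zero)
    have c2 : ContinuousAt (fun y : ℝ => (1 - y) ^ (α + 1)) 1 := by
      have houter : ContinuousAt (fun z : ℝ => z ^ (α + 1)) (1 - (1:ℝ)) :=
        Real.continuousAt_rpow_const _ _ (Or.inr (by linarith))
      exact houter.comp ((continuous_const.sub continuous_id).continuousAt)
    have cF : ContinuousAt F 1 := c1.mul (c2.sub continuousAt_const)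
    have hF1 : F 1 = -1 := by
      simp [hF, Real.zero_rpow (by linarith : α + 1 ≠ 0), Real.one_rpow]
    have := (cF.continuousWithinAt (s := Set.Iio 1)).tendsto
    rwa [hF1] at this
  have key := intervalIntegral.integral_eq_sub_of_hasDerivAt_of_tendsto
    zero_lt_one hderiv (hint1.sub hint2) htend0 htend1
  rw [intervalIntegral.integral_sub hint1 hint2,
    intervalIntegral.integral_const_mul, intervalIntegral.integral_const_mul] at key
  linarith [key]

lemma aux_beta_gamma {α : ℝ} (h0 : -(1/2) < α) (h1 : α < 0) :
    Real.Gamma (α + 1) * Real.Gamma (α + 1)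
      = Real.Gamma (2 * α + 2) * (∫ x in (0:ℝ)..1, x ^ α * (1 - x) ^ α) := by
  have hu : (0:ℝ) < α + 1 := by linarith
  have hβ := Complex.Gamma_mul_Gamma_eq_betaIntegral
    (s := ((α + 1 : ℝ) : ℂ)) (t := ((α + 1 : ℝ) : ℂ))
    (by simpa using hu) (by simpa using hu)
  have hCeq : Complex.betaIntegral ((α + 1 : ℝ) : ℂ) ((α + 1 : ℝ) : ℂ)
      = ((∫ x in (0:ℝ)..1, x ^ α * (1 - x) ^ α : ℝ) : ℂ) := by
    rw [Complex.betaIntegral, ← intervalIntegral.integral_ofReal]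
    refine intervalIntegral.integral_congr fun x hx => ?_
    rw [Set.uIcc_of_le (by norm_num : (0:ℝ) ≤ 1)] at hx
    have hexp : ((α + 1 : ℝ) : ℂ) - 1 = ((α : ℝ) : ℂ) := by push_cast; ring
    rcases eq_or_lt_of_le hx.1 with h | h
    · rw [← h]
      rw [hexp]
      simp [Complex.zero_cpow (by exact_mod_cast h1.ne : ((α:ℝ):ℂ) ≠ 0),
        Real.zero_rpow h1.ne]
    · rw [hexp]
      have h1x : (0:ℝ) ≤ 1 - x := by linarith [hx.2]
      rw [show (1 - (x:ℂ)) = ((1 - x : ℝ) : ℂ) by push_cast; ring,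
        ← Complex.ofReal_cpow h.le, ← Complex.ofReal_cpow h1x]
      push_cast
      ring
  rw [hCeq] at hβ
  have harg : ((α + 1 : ℝ) : ℂ) + ((α + 1 : ℝ) : ℂ) = ((2 * α + 2 : ℝ) : ℂ) := by
    push_cast; ring
  rw [harg, Complex.Gamma_ofReal, Complex.Gamma_ofReal] at hβ
  exact_mod_cast hβ

theorem stmt_18 (α : ℝ) (h0 : -(1/2) < α) (h1 : α < 0) :
    (∫ x in (0:ℝ)..1, x ^ (α - 1) * ((1 - x) ^ α - 1)) + 1/α
      = Real.Gamma α * Real.Gamma (α + 1) / Real.Gamma (2*α + 1) := by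
  have hkey := aux_ftc h0 h1
  have hC := aux_beta_gamma h0 h1
  have hα : α ≠ 0 := h1.ne
  have h2α : (2 * α + 1 : ℝ) ≠ 0 := by
    intro h; rw [show α = -(1/2) by linarith] at h0; exact lt_irrefl _ h0
  have hG2pos : 0 < Real.Gamma (2 * α + 1) := Real.Gamma_pos_of_pos (by linarith)
  have hG2 : Real.Gamma (2 * α + 1) ≠ 0 := hG2pos.ne'
  have hGa1 : Real.Gamma (α + 1) = α * Real.Gamma α := Real.Gamma_add_one hα
  have hG22 : Real.Gamma (2 * α + 2) = (2 * α + 1) * Real.Gamma (2 * α + 1) := by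
    rw [show (2 * α + 2 : ℝ) = (2 * α + 1) + 1 by ring, Real.Gamma_add_one h2α]
  rw [hGa1, hG22] at hC
  rw [hGa1]
  set I := ∫ x in (0:ℝ)..1, x ^ (α - 1) * ((1 - x) ^ α - 1)
  set C := ∫ x in (0:ℝ)..1, x ^ α * (1 - x) ^ α
  set G := Real.Gamma α
  set G2 := Real.Gamma (2 * α + 1)
  field_simp
  nlinarith [hkey, hC, mul_pos hG2pos hG2pos]
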